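/- λ₁(β) is a principal eigenvalue: let β ∈ (0,1/2) and λ₁ = sup A_β. Then there exists u : T_m → ℝ with u(∅) = 1, u > 0 on T_m, u constant on each level, non-increasing with respect to the level, such that Δ_β u + λ₁ u = 0 on T_m and u(x_n) → 0 along every branch. -/

import Mathlib

open Filter Finset Topology

/-- The weight `p_β`: `1` if `β = 0`, and `β/(1-β)` otherwise. -/
noncomputable def pB (β : ℝ) : ℝ := if β = 0 then 1 else β / (1 - β)

/-- Vertices of the regular `m`-branching tree are finite sequences over `Fin m`
(the root is `[]`, the successors of `x` are `i :: x`, the predecessor of `a :: t` is `t`,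
and the level `|x|` is the list length).  The `β`-Laplacian on the tree. -/
noncomputable def lapB (m : ℕ) (β : ℝ) (u : List (Fin m) → ℝ) : List (Fin m) → ℝ
  | [] => (∑ i : Fin m, u [i]) / m - u []
  | a :: t =>
      (β * u t + (1 - β) * (∑ i : Fin m, u (i :: a :: t)) / m - u (a :: t)) *
        pB β ^ (-((a :: t).length : ℤ))

/-- A branch: an infinite path starting at the root, following successors. -/
def IsBranch (m : ℕ) (b : ℕ → List (Fin m)) : Prop :=
  b 0 = [] ∧ ∀ n, ∃ i : Fin m, b (n + 1) = i :: b n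

/-- Homogeneous Dirichlet boundary condition: `u → 0` along every branch. -/
def ZeroOnBoundary (m : ℕ) (u : List (Fin m) → ℝ) : Prop :=
  ∀ b : ℕ → List (Fin m), IsBranch m b → Tendsto (fun n => u (b n)) atTop (𝓝 0)

/-- `lam` is a principal eigenvalue of `Δ_β`: it is positive and admits a bounded
nonnegative nontrivial eigenfunction vanishing on the boundary. -/
def IsPrincipalEigenvalue (m : ℕ) (β lam : ℝ) : Prop :=
  0 < lam ∧ ∃ u : List (Fin m) → ℝ,
    (∃ M, ∀ x, |u x| ≤ M) ∧ (∀ x, 0 ≤ u x) ∧ u ≠ 0 ∧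
    (∀ x, -lapB m β u x = lam * u x) ∧ ZeroOnBoundary m u

/-- Membership in the set `A_β`. -/
def memA (m : ℕ) (β lam : ℝ) : Prop :=
  0 < lam ∧ ∃ v : List (Fin m) → ℝ, ∃ c C : ℝ, 0 < c ∧
    (∀ x, c < v x ∧ v x < C) ∧ ∀ x, lapB m β v x + lam * v x ≤ 0

/-- `λ₁(β) = sup A_β`. -/
noncomputable def lam1 (m : ℕ) (β : ℝ) : ℝ := sSup {lam | memA m β lam}


/-- `(g n, S n)` where `g` solves the radial eigen-recurrence and `S n = ∑_{k=1}^n g k`. -/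
noncomputable def gp (β lam : ℝ) : ℕ → ℝ × ℝ
  | 0 => (1, 0)
  | n+1 =>
    let q := gp β lam n
    let g' := q.1 - lam * (β / (1-β))^n * (1 + q.2 / (1-β))
    (g', q.2 + g')

noncomputable def gg (β lam : ℝ) (n : ℕ) : ℝ := (gp β lam n).1
noncomputable def SS (β lam : ℝ) (n : ℕ) : ℝ := (gp β lam n).2
noncomputable def pb (β : ℝ) : ℝ := β / (1-β)

lemma gg_zero (β lam : ℝ) : gg β lam 0 = 1 := rfl
lemma SS_zero (β lam : ℝ) : SS β lam 0 = 0 := rfl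
lemma gg_succ (β lam : ℝ) (n : ℕ) :
    gg β lam (n+1) = gg β lam n - lam * pb β ^ n * (1 + SS β lam n / (1-β)) := rfl
lemma SS_succ (β lam : ℝ) (n : ℕ) :
    SS β lam (n+1) = SS β lam n + gg β lam (n+1) := rfl
lemma gg_one (β lam : ℝ) : gg β lam 1 = 1 - lam := by
  simp [gg_succ, gg_zero, SS_zero]

/-- the two-term recurrence. -/
lemma gg_rec (β lam : ℝ) (hβ : (1:ℝ) - β ≠ 0) (n : ℕ) :
    (1-β) * gg β lam (n+2) = (1 - lam * pb β ^ (n+1)) * gg β lam (n+1) - β * gg β lam n := by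
  have h1 : gg β lam (n+1) = gg β lam n - lam * pb β ^ n * (1 + SS β lam n / (1-β)) := rfl
  have h2 : gg β lam (n+2)
      = gg β lam (n+1) - lam * pb β ^ (n+1) * (1 + SS β lam (n+1) / (1-β)) := rfl
  have h3 : SS β lam (n+1) = SS β lam n + gg β lam (n+1) := rfl
  rw [h2, h3, h1]
  have hp : pb β ^ (n+1) = pb β ^ n * (β/(1-β)) := by rw [pow_succ]; rfl
  rw [hp]
  field_simp
  ring


/-- Comparison: any positive supersolution `b` with rate `ν ≥ lam` lies below `b 0 • gg lam`. -/
lemma gg_cmp (β lam ν : ℝ) (hβ0 : 0 < β) (hβ1 : β < 1/2) (hlam : 0 ≤ lam) (hlν : lam ≤ ν)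
    (b : ℕ → ℝ) (hbpos : ∀ n, 0 < b n)
    (hb1 : b 1 ≤ (1 - ν) * b 0)
    (hrec : ∀ n, (1-β) * b (n+2) ≤ (1 - ν * pb β ^ (n+1)) * b (n+1) - β * b n) :
    ∀ n, 0 < gg β lam n ∧ b n ≤ b 0 * gg β lam n ∧
      b (n+1) * gg β lam n ≤ gg β lam (n+1) * b n := by
  have hβ' : (0:ℝ) < 1 - β := by linarith
  have hpb : 0 < pb β := div_pos hβ0 hβ'
  intro n
  induction n with
  | zero =>
    refine ⟨by rw [gg_zero]; norm_num, by rw [gg_zero]; nlinarith [hbpos 0], ?_⟩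
    rw [gg_zero, gg_one]
    calc b 1 * 1 = b 1 := by ring
    _ ≤ (1-ν) * b 0 := hb1
    _ ≤ (1-lam) * b 0 := by nlinarith [hbpos 0]
  | succ n ih =>
    obtain ⟨hgpos, hble, hratio⟩ := ih
    have hbn := hbpos n
    have hbn1 := hbpos (n+1)
    -- positivity of gg (n+1)
    have hg1pos : 0 < gg β lam (n+1) := by
      by_contra h
      push_neg at h
      nlinarith
    refine ⟨hg1pos, ?_, ?_⟩
    · -- b (n+1) ≤ b 0 * gg (n+1)
      have hb0 := hbpos 0
      have h1 : b (n+1) * gg β lam n ≤ (b 0 * gg β lam (n+1)) * gg β lam n := by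
        calc b (n+1) * gg β lam n ≤ gg β lam (n+1) * b n := hratio
        _ ≤ gg β lam (n+1) * (b 0 * gg β lam n) := by
            exact mul_le_mul_of_nonneg_left hble (le_of_lt hg1pos)
        _ = (b 0 * gg β lam (n+1)) * gg β lam n := by ring
      exact le_of_mul_le_mul_right h1 hgpos
    · -- ratio step
      have ha := gg_rec β lam (ne_of_gt hβ') n
      have hb := hrec n
      have hpn : 0 < pb β ^ (n+1) := pow_pos hpb _
      have key : 0 ≤ (1-β) * (gg β lam (n+2) * b (n+1) - b (n+2) * gg β lam (n+1)) := by
        have e1 : (1-β) * (gg β lam (n+2) * b (n+1)) =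
            ((1 - lam * pb β ^ (n+1)) * gg β lam (n+1) - β * gg β lam n) * b (n+1) := by
          rw [← ha]; ring
        have e2 : (1-β) * (b (n+2) * gg β lam (n+1)) ≤
            ((1 - ν * pb β ^ (n+1)) * b (n+1) - β * b n) * gg β lam (n+1) := by
          have := mul_le_mul_of_nonneg_right hb (le_of_lt hg1pos)
          calc (1-β) * (b (n+2) * gg β lam (n+1)) = ((1-β) * b (n+2)) * gg β lam (n+1) := by ring
          _ ≤ _ := this
        have e3 : ((1 - lam * pb β ^ (n+1)) * gg β lam (n+1) - β * gg β lam n) * b (n+1)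
            - ((1 - ν * pb β ^ (n+1)) * b (n+1) - β * b n) * gg β lam (n+1)
            = (ν - lam) * pb β ^ (n+1) * (gg β lam (n+1) * b (n+1))
              + β * (b n * gg β lam (n+1) - gg β lam n * b (n+1)) := by ring
        nlinarith [mul_pos hg1pos hbn1, mul_nonneg (mul_nonneg (by linarith : (0:ℝ) ≤ ν - lam) (le_of_lt hpn)) (le_of_lt (mul_pos hg1pos hbn1))]
      nlinarith

lemma gg_cont (β : ℝ) (n : ℕ) :
    Continuous (fun lam => (gp β lam n).1) ∧ Continuous (fun lam => (gp β lam n).2) := by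
  induction n with
  | zero => exact ⟨continuous_const, continuous_const⟩
  | succ n ih =>
    obtain ⟨h1, h2⟩ := ih
    have hg' : Continuous (fun lam => (gp β lam n).1
        - lam * (β / (1-β))^n * (1 + (gp β lam n).2 / (1-β))) := by
      fun_prop
    constructor
    · show Continuous fun lam => (gp β lam (n+1)).1
      simp only [gp]
      exact hg'
    · show Continuous fun lam => (gp β lam (n+1)).2
      simp only [gp]
      exact h2.add hg'


/-- closed form for `∑_{j<n} (j+1) x^j`. -/
lemma sum_geom_deriv (x : ℝ) (n : ℕ) :
    (1-x)^2 * ∑ j ∈ range n, ((j:ℝ)+1) * x^j = 1 - x^n * (1 + n * (1-x)) := by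
  induction n with
  | zero => simp
  | succ n ih =>
    rw [Finset.sum_range_succ, mul_add, ih]
    push_cast
    ring

lemma gg_telescope (β lam : ℝ) (a : ℕ) :
    ∀ n, gg β lam (a + n) = gg β lam a
      - lam * ∑ j ∈ Finset.Ico a (a+n), pb β ^ j * (1 + SS β lam j / (1-β)) := by
  intro n
  induction n with
  | zero => simp
  | succ n ih =>
    have : a + (n+1) = (a+n) + 1 := by ring
    rw [this, gg_succ, ih, Finset.sum_Ico_succ_top (by omega : a ≤ a + n)]
    ring

/-- Persistence: if `gg` is bounded below by `b` up to level `N` and the tail of the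
series is small, then `gg` stays above `b/2` forever. -/
lemma gg_persist (β lam : ℝ) (hβ0 : 0 < β) (hβ1 : β < 1/2) (hlam : 0 ≤ lam)
    (b : ℝ) (hb : 0 < b) (hb1 : b ≤ 1) (N : ℕ)
    (hbase : ∀ k, k ≤ N → b ≤ gg β lam k)
    (htail : lam * (pb β ^ N * (1 + N * (1 - pb β))) ≤ b/2 * ((1-β) * (1 - pb β)^2)) :
    ∀ n, b/2 ≤ gg β lam n ∧ gg β lam n ≤ 1 ∧ 0 ≤ SS β lam n ∧ SS β lam n ≤ n := by
  have hβ' : (0:ℝ) < 1 - β := by linarith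
  have hpb0 : 0 < pb β := div_pos hβ0 hβ'
  have hpb1 : pb β < 1 := by
    rw [pb, div_lt_one hβ']; linarith
  have key : ∀ n, ∀ k, k ≤ n → b/2 ≤ gg β lam k ∧ gg β lam k ≤ 1 ∧ 0 ≤ SS β lam k ∧ SS β lam k ≤ k := by
    intro n
    induction n with
    | zero =>
      intro k hk
      interval_cases k
      refine ⟨by rw [gg_zero]; linarith, by rw [gg_zero], by rw [SS_zero],
        by rw [SS_zero]; simp⟩
    | succ n ih =>
      intro k hk
      rcases Nat.lt_or_ge k (n+1) with h | h
      · exact ih k (by omega)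
      have hk' : k = n + 1 := by omega
      subst hk'
      obtain ⟨ihl, ihu, ihS0, ihS1⟩ := ih n le_rfl
      -- upper bound and drop nonneg
      have hdrop : 0 ≤ lam * pb β ^ n * (1 + SS β lam n / (1-β)) := by
        have : 0 ≤ SS β lam n / (1-β) := div_nonneg ihS0 (le_of_lt hβ')
        have hpn : (0:ℝ) ≤ pb β ^ n := le_of_lt (pow_pos hpb0 n)
        positivity
      have hup : gg β lam (n+1) ≤ 1 := by
        rw [gg_succ]; linarith
      -- lower bound
      have hlow : b/2 ≤ gg β lam (n+1) := by
        rcases Nat.lt_or_ge n N with hN | hN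
        · exact le_trans (by linarith) (hbase (n+1) (by omega))
        · -- n ≥ N : telescope from N
          have htel := gg_telescope β lam N (n + 1 - N)
          have hNn : N + (n + 1 - N) = n + 1 := by omega
          rw [hNn] at htel
          -- bound the sum
          have hsum : ∑ j ∈ Finset.Ico N (n+1), pb β ^ j * (1 + SS β lam j / (1-β))
              ≤ (1/(1-β)) * ∑ j ∈ Finset.Ico N (n+1), ((j:ℝ)+1) * pb β ^ j := by
            rw [Finset.mul_sum]
            apply Finset.sum_le_sum
            intro j hj
            simp only [Finset.mem_Ico] at hj
            have hjS : SS β lam j ≤ j := (ih j (by omega)).2.2.2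
            have hpj : (0:ℝ) < pb β ^ j := pow_pos hpb0 j
            have h1 : 1 + SS β lam j / (1-β) ≤ ((j:ℝ)+1) / (1-β) := by
              rw [le_div_iff₀ hβ', add_mul, one_mul, div_mul_cancel₀ _ (ne_of_gt hβ')]
              linarith
            calc pb β ^ j * (1 + SS β lam j / (1-β))
                ≤ pb β ^ j * (((j:ℝ)+1)/(1-β)) := mul_le_mul_of_nonneg_left h1 hpj.le
              _ = 1/(1-β) * (((j:ℝ)+1) * pb β ^ j) := by ring
          have hq : (0:ℝ) < 1 - pb β := by linarith
          have hsum2 : ∑ j ∈ Finset.Ico N (n+1), ((j:ℝ)+1) * pb β ^ j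
              ≤ pb β ^ N * (1 + N * (1 - pb β)) / (1 - pb β)^2 := by
            rw [Finset.sum_Ico_eq_sub _ (by omega : N ≤ n+1), le_div_iff₀ (by positivity)]
            have e1 := sum_geom_deriv (pb β) (n+1)
            have e2 := sum_geom_deriv (pb β) N
            have h3 : (0:ℝ) ≤ pb β ^ (n+1) * (1 + ((n:ℝ)+1) * (1 - pb β)) := by
              have : (0:ℝ) ≤ 1 + ((n:ℝ)+1) * (1 - pb β) := by positivity
              positivity
            push_cast at e1 e2 ⊢
            nlinarith
          have hSig : ∑ j ∈ Finset.Ico N (n+1), pb β ^ j * (1 + SS β lam j / (1-β))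
              ≤ pb β ^ N * (1 + N * (1 - pb β)) / ((1-β) * (1 - pb β)^2) := by
            calc _ ≤ (1/(1-β)) * ∑ j ∈ Finset.Ico N (n+1), ((j:ℝ)+1) * pb β ^ j := hsum
            _ ≤ (1/(1-β)) * (pb β ^ N * (1 + N * (1 - pb β)) / (1 - pb β)^2) := by
                apply mul_le_mul_of_nonneg_left hsum2 (by positivity)
            _ = _ := by field_simp
          have hbN : b ≤ gg β lam N := hbase N le_rfl
          have hlt : lam * ∑ j ∈ Finset.Ico N (n+1), pb β ^ j * (1 + SS β lam j / (1-β))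
              ≤ b/2 := by
            calc lam * ∑ j ∈ Finset.Ico N (n+1), pb β ^ j * (1 + SS β lam j / (1-β))
                ≤ lam * (pb β ^ N * (1 + N * (1 - pb β)) / ((1-β) * (1 - pb β)^2)) :=
                  mul_le_mul_of_nonneg_left hSig hlam
            _ ≤ b/2 := by
                rw [mul_div_assoc', div_le_iff₀ (by positivity)]
                calc lam * (pb β ^ N * (1 + ↑N * (1 - pb β)))
                    ≤ b/2 * ((1-β) * (1 - pb β)^2) := htail
                  _ = b/2 * ((1-β) * (1 - pb β)^2) := rfl
          rw [htel]
          linarith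
      refine ⟨hlow, hup, ?_, ?_⟩
      · rw [SS_succ]; linarith
      · rw [SS_succ]; push_cast; linarith
  intro n; exact key n n le_rfl


/-- The set of `lam` whose radial solution stays uniformly positive. -/
def Bset (β : ℝ) : Set ℝ := {lam | 0 < lam ∧ ∃ c, 0 < c ∧ ∀ n, c ≤ gg β lam n}

section
variable {β : ℝ}

lemma hbeta' (hβ1 : β < 1/2) : (0:ℝ) < 1 - β := by linarith
lemma hpb0 (hβ0 : 0 < β) (hβ1 : β < 1/2) : 0 < pb β := div_pos hβ0 (hbeta' hβ1)
lemma hpb1 (hβ0 : 0 < β) (hβ1 : β < 1/2) : pb β < 1 := by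
  rw [pb, div_lt_one (hbeta' hβ1)]; linarith

/-- under positivity, `SS` is nonnegative and `gg` is antitone and `≤ 1`. -/
lemma gg_antitone_of_pos (hβ0 : 0 < β) (hβ1 : β < 1/2) {lam : ℝ} (hlam : 0 ≤ lam) (hpos : ∀ n, 0 ≤ gg β lam n) :
    (∀ n, 0 ≤ SS β lam n) ∧ Antitone (gg β lam) ∧ ∀ n, gg β lam n ≤ 1 := by
  have hβ' := hbeta' hβ1
  have hp := hpb0 hβ0 hβ1
  have hS : ∀ n, 0 ≤ SS β lam n := by
    intro n
    induction n with
    | zero => rw [SS_zero]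
    | succ n ih => rw [SS_succ]; have := hpos (n+1); linarith
  have hanti : Antitone (gg β lam) := by
    apply antitone_nat_of_succ_le
    intro n
    rw [gg_succ]
    have h1 : 0 ≤ SS β lam n / (1-β) := div_nonneg (hS n) hβ'.le
    have h2 : (0:ℝ) ≤ pb β ^ n := (pow_pos hp n).le
    have h3 : 0 ≤ lam * pb β ^ n * (1 + SS β lam n / (1-β)) :=
      mul_nonneg (mul_nonneg hlam h2) (by linarith)
    linarith
  refine ⟨hS, hanti, fun n => ?_⟩
  calc gg β lam n ≤ gg β lam 0 := hanti (Nat.zero_le n)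
  _ = 1 := gg_zero β lam

lemma Bset_lt_one {lam : ℝ} (h : lam ∈ Bset β) : lam < 1 := by
  obtain ⟨hl, c, hc, hcle⟩ := h
  have := hcle 1
  rw [gg_one] at this
  linarith

lemma Bset_down (hβ0 : 0 < β) (hβ1 : β < 1/2) {lam μ : ℝ} (hl : 0 < lam) (hlμ : lam ≤ μ) (hμ : μ ∈ Bset β) :
    lam ∈ Bset β := by
  obtain ⟨hμ0, c, hc, hcle⟩ := hμ
  have hbpos : ∀ n, 0 < gg β μ n := fun n => lt_of_lt_of_le hc (hcle n)
  have hcmp := gg_cmp β lam μ hβ0 hβ1 hl.le hlμ (gg β μ) hbpos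
    (by rw [gg_one, gg_zero]; ring_nf; exact le_rfl)
    (fun n => le_of_eq (gg_rec β μ (ne_of_gt (hbeta' hβ1)) n))
  refine ⟨hl, c, hc, fun n => ?_⟩
  have := (hcmp n).2.1
  rw [gg_zero, one_mul] at this
  exact le_trans (hcle n) this

lemma Bset_nonempty (hβ0 : 0 < β) (hβ1 : β < 1/2) : ((1-β) * (1 - pb β)^2 / 2) ∈ Bset β := by
  set lam0 := (1-β) * (1 - pb β)^2 / 2 with hlam0
  have hβ' := hbeta' hβ1
  have hq : (0:ℝ) < 1 - pb β := by have := hpb1 hβ0 hβ1; linarith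
  have hl0 : 0 < lam0 := by positivity
  have := gg_persist β lam0 hβ0 hβ1 hl0.le 1 one_pos le_rfl 0
    (fun k hk => by interval_cases k; rw [gg_zero])
    (by apply le_of_eq; rw [hlam0]; push_cast; ring)
  exact ⟨hl0, 1/2, by norm_num, fun n => (this n).1⟩

lemma Bset_bddAbove : BddAbove (Bset β) :=
  ⟨1, fun lam h => (Bset_lt_one h).le⟩
end


noncomputable def lamB (β : ℝ) : ℝ := sSup (Bset β)

section
variable {β : ℝ}

lemma lamB_pos (hβ0 : 0 < β) (hβ1 : β < 1/2) : 0 < lamB β := by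
  have h := Bset_nonempty hβ0 hβ1
  have h1 : (1-β) * (1 - pb β)^2 / 2 ≤ lamB β := le_csSup Bset_bddAbove h
  have hq : (0:ℝ) < 1 - pb β := by have := hpb1 hβ0 hβ1; linarith
  have hβ' := hbeta' hβ1
  nlinarith

lemma lamB_le_one (hβ0 : 0 < β) (hβ1 : β < 1/2) : lamB β ≤ 1 :=
  csSup_le ⟨_, Bset_nonempty hβ0 hβ1⟩ (fun x hx => (Bset_lt_one hx).le)

lemma mem_Bset_of_lt (hβ0 : 0 < β) (hβ1 : β < 1/2) {lam : ℝ} (h0 : 0 < lam)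
    (hlt : lam < lamB β) : lam ∈ Bset β := by
  obtain ⟨μ, hμ, hlμ⟩ := exists_lt_of_lt_csSup ⟨_, Bset_nonempty hβ0 hβ1⟩ hlt
  exact Bset_down hβ0 hβ1 h0 hlμ.le hμ

lemma gstar_nonneg (hβ0 : 0 < β) (hβ1 : β < 1/2) : ∀ n, 0 ≤ gg β (lamB β) n := by
  intro n
  set L1 := lamB β with hL1
  have hL1pos := lamB_pos hβ0 hβ1
  have htend0 : Tendsto (fun k : ℕ => L1 / ((k:ℝ) + 2)) atTop (𝓝 0) := by
    have h1 : Tendsto (fun k : ℕ => ((k:ℝ) + 2)) atTop atTop :=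
      tendsto_atTop_add_const_right _ 2 tendsto_natCast_atTop_atTop
    exact Tendsto.div_atTop tendsto_const_nhds h1
  have htend : Tendsto (fun k : ℕ => L1 - L1 / ((k:ℝ) + 2)) atTop (𝓝 L1) := by
    have := (tendsto_const_nhds : Tendsto (fun _ : ℕ => L1) atTop (𝓝 L1)).sub htend0
    simpa using this
  have hcont : Tendsto (fun k : ℕ => gg β (L1 - L1 / ((k:ℝ) + 2)) n) atTop
      (𝓝 (gg β L1 n)) := ((gg_cont β n).1.tendsto L1).comp htend
  apply ge_of_tendsto' hcont
  intro k
  have hk2 : (0:ℝ) < (k:ℝ) + 2 := by positivity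
  have h1 : 0 < L1 / ((k:ℝ) + 2) := div_pos hL1pos hk2
  have h2 : L1 / ((k:ℝ) + 2) < L1 := by
    rw [div_lt_iff₀ hk2]
    nlinarith
  have hmem : (L1 - L1 / ((k:ℝ) + 2)) ∈ Bset β :=
    mem_Bset_of_lt hβ0 hβ1 (by linarith) (by linarith)
  obtain ⟨-, c, hc, hcle⟩ := hmem
  exact le_trans hc.le (hcle n)

lemma gstar_pos (hβ0 : 0 < β) (hβ1 : β < 1/2) : ∀ n, 0 < gg β (lamB β) n := by
  have hnn := gstar_nonneg hβ0 hβ1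
  have hS := (gg_antitone_of_pos hβ0 hβ1 (lamB_pos hβ0 hβ1).le hnn).1
  intro n
  rcases lt_or_eq_of_le (hnn n) with h | h
  · exact h
  · exfalso
    have h1 : gg β (lamB β) (n+1) < 0 := by
      rw [gg_succ, ← h]
      have hp : (0:ℝ) < pb β ^ n := pow_pos (hpb0 hβ0 hβ1) n
      have hs : 0 ≤ SS β (lamB β) n / (1-β) := div_nonneg (hS n) (hbeta' hβ1).le
      have hl := lamB_pos hβ0 hβ1
      have h4 : 0 < lamB β * pb β ^ n * (1 + SS β (lamB β) n / (1-β)) :=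
        mul_pos (mul_pos hl hp) (by linarith)
      linarith
    exact absurd (hnn (n+1)) (not_le.mpr h1)

lemma gstar_tendsto (hβ0 : 0 < β) (hβ1 : β < 1/2) :
    Tendsto (gg β (lamB β)) atTop (𝓝 0) := by
  have hpos := gstar_pos hβ0 hβ1
  have hnn := gstar_nonneg hβ0 hβ1
  have hanti := (gg_antitone_of_pos hβ0 hβ1 (lamB_pos hβ0 hβ1).le hnn).2.1
  have hbdd : BddBelow (Set.range (gg β (lamB β))) :=
    ⟨0, by rintro x ⟨n, rfl⟩; exact hnn n⟩
  have htendL : Tendsto (gg β (lamB β)) atTop (𝓝 (⨅ n, gg β (lamB β) n)) :=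
    tendsto_atTop_ciInf hanti hbdd
  set L := ⨅ n, gg β (lamB β) n with hLdef
  have hL0 : 0 ≤ L := le_ciInf fun n => hnn n
  rcases eq_or_lt_of_le hL0 with h | h
  · rwa [← h] at htendL
  · -- L > 0 : contradiction
    exfalso
    have hLle : ∀ n, L ≤ gg β (lamB β) n := fun n => ciInf_le hbdd n
    have hL1 : L ≤ 1 := le_trans (hLle 0) (le_of_eq (gg_zero β _))
    have hβ' := hbeta' hβ1
    have hq : (0:ℝ) < 1 - pb β := by have := hpb1 hβ0 hβ1; linarith
    have hp0 := hpb0 hβ0 hβ1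
    -- choose N with small tail
    have httail : Tendsto (fun N : ℕ => pb β ^ N * (1 + (N:ℝ) * (1 - pb β))) atTop (𝓝 0) := by
      have h1 : Tendsto (fun N : ℕ => pb β ^ N) atTop (𝓝 0) :=
        tendsto_pow_atTop_nhds_zero_of_lt_one hp0.le (hpb1 hβ0 hβ1)
      have h2 : Tendsto (fun N : ℕ => (N:ℝ) * pb β ^ N) atTop (𝓝 0) := by
        have hs := summable_pow_mul_geometric_of_norm_lt_one (R := ℝ) 1
          (by rw [Real.norm_eq_abs, abs_of_pos hp0]; exact hpb1 hβ0 hβ1)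
        have := hs.tendsto_atTop_zero
        simpa [pow_one] using this
      have := h1.add ((tendsto_const_nhds :
        Tendsto (fun _ : ℕ => (1 - pb β)) atTop (𝓝 (1 - pb β))).mul h2)
      simp only [mul_zero, add_zero, zero_add] at this
      apply this.congr
      intro N; ring
    have hε : (0:ℝ) < L/8 * ((1-β) * (1 - pb β)^2) := by positivity
    obtain ⟨N, hN⟩ := (httail.eventually_lt_const hε).exists
    -- choose μ slightly above lamB
    have hev1 : ∀ᶠ μ in 𝓝[>] (lamB β), ∀ k ∈ Finset.range (N+1),
        gg β (lamB β) k - L/2 < gg β μ k := by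
      rw [Finset.eventually_all]
      intro k _
      apply eventually_nhdsWithin_of_eventually_nhds
      have hc : Continuous (fun μ => gg β μ k) := (gg_cont β k).1
      have : {μ | gg β (lamB β) k - L/2 < gg β μ k} ∈ 𝓝 (lamB β) := by
        apply (isOpen_lt continuous_const hc).mem_nhds
        simp only [Set.mem_setOf_eq]
        linarith [h]
      exact this
    have hev2 : ∀ᶠ μ in 𝓝[>] (lamB β), μ < lamB β + 1 :=
      eventually_nhdsWithin_of_eventually_nhds (Iio_mem_nhds (lt_add_one _))
    have hev3 : ∀ᶠ μ in 𝓝[>] (lamB β), lamB β < μ := self_mem_nhdsWithin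
    obtain ⟨μ, hμ1, hμlt, hμgt⟩ := (hev1.and (hev2.and hev3)).exists
    -- μ ∈ Bset β via persistence
    have hμpos : 0 < μ := lt_trans (lamB_pos hβ0 hβ1) hμgt
    have hμ2' : μ ≤ 2 := by have := lamB_le_one hβ0 hβ1; linarith
    have hbase : ∀ k, k ≤ N → L/2 ≤ gg β μ k := by
      intro k hk
      have := hμ1 k (Finset.mem_range.mpr (by omega))
      have := hLle k
      linarith
    have htail2 : μ * (pb β ^ N * (1 + (N:ℝ) * (1 - pb β))) ≤
        L/2/2 * ((1-β) * (1 - pb β)^2) := by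
      have hnn2 : (0:ℝ) ≤ pb β ^ N * (1 + (N:ℝ) * (1 - pb β)) := by positivity
      calc μ * (pb β ^ N * (1 + (N:ℝ) * (1 - pb β)))
          ≤ 2 * (pb β ^ N * (1 + (N:ℝ) * (1 - pb β))) := by nlinarith
        _ ≤ 2 * (L/8 * ((1-β) * (1 - pb β)^2)) := by nlinarith
        _ = L/2/2 * ((1-β) * (1 - pb β)^2) := by ring
    have hper := gg_persist β μ hβ0 hβ1 hμpos.le (L/2) (by linarith) (by linarith) N
      hbase htail2
    have hμmem : μ ∈ Bset β := ⟨hμpos, L/4, by linarith, fun n => by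
      have := (hper n).1; linarith⟩
    exact absurd (le_csSup Bset_bddAbove hμmem) (not_le.mpr hμgt)
end


section
variable {m : ℕ} {β : ℝ}

lemma pB_eq (hβ0 : 0 < β) : pB β = pb β := if_neg (ne_of_gt hβ0)

lemma lapB_nil (u : List (Fin m) → ℝ) :
    lapB m β u [] = (∑ i : Fin m, u [i]) / m - u [] := rfl

lemma lapB_cons (u : List (Fin m) → ℝ) (a : Fin m) (t : List (Fin m)) :
    lapB m β u (a :: t) =
      (β * u t + (1 - β) * (∑ i : Fin m, u (i :: a :: t)) / m - u (a :: t)) *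
        pB β ^ (-((a :: t).length : ℤ)) := rfl

/-- radial functions: exact computation of `lapB + lam`. -/
lemma lapB_radial (hm : 2 ≤ m) (hβ0 : 0 < β) (hβ1 : β < 1/2) (lam : ℝ) (x : List (Fin m)) :
    lapB m β (fun y => gg β lam y.length) x + lam * gg β lam x.length = 0 := by
  have hm0 : (0:ℝ) < (m:ℝ) := by
    have : 0 < m := by omega
    exact_mod_cast this
  have hp0 := hpb0 hβ0 hβ1
  match x with
  | [] =>
    show (∑ _i : Fin m, gg β lam 1) / m - gg β lam 0 + lam * gg β lam 0 = 0
    rw [Finset.sum_const, Finset.card_univ, Fintype.card_fin, nsmul_eq_mul,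
      mul_div_cancel_left₀ _ (ne_of_gt hm0), gg_one, gg_zero]
    ring
  | a :: t =>
    set n := t.length with hn
    show (β * gg β lam n + (1 - β) * (∑ _i : Fin m, gg β lam (n+2)) / m
        - gg β lam (n+1)) * pB β ^ (-(((n:ℤ)+1))) + lam * gg β lam (n+1) = 0
    rw [Finset.sum_const, Finset.card_univ, Fintype.card_fin, nsmul_eq_mul]
    have hrec := gg_rec β lam (ne_of_gt (hbeta' hβ1)) n
    have hinner : β * gg β lam n + (1 - β) * ((m:ℝ) * gg β lam (n+2)) / m
        - gg β lam (n+1) = -(lam * pb β ^ (n+1) * gg β lam (n+1)) := by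
      rw [mul_div_assoc, mul_div_cancel_left₀ _ (ne_of_gt hm0)]
      linarith
    rw [hinner, pB_eq hβ0]
    have key : pb β ^ (n+1) * pb β ^ (-(((n:ℤ)+1))) = 1 := by
      rw [← zpow_natCast (pb β) (n+1), ← zpow_add₀ (ne_of_gt hp0)]
      have he : ((n+1:ℕ) : ℤ) + (-((n:ℤ)+1)) = 0 := by push_cast; ring
      rw [he, zpow_zero]
    have : -(lam * pb β ^ (n + 1) * gg β lam (n + 1)) * pb β ^ (-((n:ℤ) + 1))
        = -(lam * gg β lam (n+1)) * (pb β ^ (n+1) * pb β ^ (-(((n:ℤ)+1)))) := by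
      ring
    rw [this, key]
    ring

/-- `Bset β ⊆ A_β`. -/
lemma Bset_subset_memA (hm : 2 ≤ m) (hβ0 : 0 < β) (hβ1 : β < 1/2) {lam : ℝ}
    (h : lam ∈ Bset β) : memA m β lam := by
  obtain ⟨hl, c, hc, hcle⟩ := h
  have hpos : ∀ k, 0 ≤ gg β lam k := fun k => le_trans hc.le (hcle k)
  have hone := (gg_antitone_of_pos hβ0 hβ1 hl.le hpos).2.2
  refine ⟨hl, fun y => gg β lam y.length, c/2, 2, by linarith, fun x => ⟨?_, ?_⟩, fun x => ?_⟩
  · exact lt_of_lt_of_le (by linarith) (hcle x.length)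
  · exact lt_of_le_of_lt (hone x.length) one_lt_two
  · rw [lapB_radial hm hβ0 hβ1 lam x]

/-- `A_β ⊆ Bset β`. -/
lemma memA_subset_Bset (hm : 2 ≤ m) (hβ0 : 0 < β) (hβ1 : β < 1/2) {lam : ℝ}
    (h : memA m β lam) : lam ∈ Bset β := by
  obtain ⟨hl, v, c, C, hc, hv, hineq⟩ := h
  have hm0 : (0:ℝ) < (m:ℝ) := by
    have : 0 < m := by omega
    exact_mod_cast this
  have hβ' := hbeta' hβ1
  have hp0 := hpb0 hβ0 hβ1
  have i0 : Fin m := ⟨0, by omega⟩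
  -- level infima
  set h' : ℕ → ℝ := fun n => sInf (v '' {x | x.length = n}) with hh'
  have hne : ∀ n, (v '' {x : List (Fin m) | x.length = n}).Nonempty := by
    intro n
    exact ⟨v (List.replicate n i0), ⟨List.replicate n i0, by simp, rfl⟩⟩
  have hbdd : ∀ n, BddBelow (v '' {x : List (Fin m) | x.length = n}) := by
    intro n
    exact ⟨c, by rintro y ⟨x, -, rfl⟩; exact (hv x).1.le⟩
  have hcle : ∀ n, c ≤ h' n := fun n =>
    le_csInf (hne n) (by rintro y ⟨x, -, rfl⟩; exact (hv x).1.le)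
  have hle : ∀ n (x : List (Fin m)), x.length = n → h' n ≤ v x := by
    intro n x hx
    exact csInf_le (hbdd n) ⟨x, hx, rfl⟩
  have h'pos : ∀ n, 0 < h' n := fun n => lt_of_lt_of_le hc (hcle n)
  have h0 : h' 0 = v [] := by
    have : {x : List (Fin m) | x.length = 0} = {[]} := by
      ext x; simp [List.length_eq_zero_iff]
    rw [hh']
    simp only [this, Set.image_singleton, csInf_singleton]
  have hh0C : h' 0 < C := by rw [h0]; exact (hv []).2
  -- root inequality
  have hroot : h' 1 ≤ (1 - lam) * h' 0 := by
    have := hineq []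
    rw [lapB_nil] at this
    have hsum : (m:ℝ) * h' 1 ≤ ∑ i : Fin m, v [i] := by
      calc (m:ℝ) * h' 1 = ∑ _i : Fin m, h' 1 := by
            rw [Finset.sum_const, Finset.card_univ, Fintype.card_fin, nsmul_eq_mul]
        _ ≤ ∑ i : Fin m, v [i] := Finset.sum_le_sum (fun i _ => hle 1 [i] rfl)
    have h2 : h' 1 ≤ (∑ i : Fin m, v [i]) / m := by
      rw [le_div_iff₀ hm0]
      linarith
    rw [h0]
    linarith
  -- interior inequality
  have hrec : ∀ n, (1-β) * h' (n+2) ≤ (1 - lam * pb β ^ (n+1)) * h' (n+1) - β * h' n := by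
    intro n
    by_contra hcon
    push_neg at hcon
    set δ := (1-β) * h' (n+2) - ((1 - lam * pb β ^ (n+1)) * h' (n+1) - β * h' n) with hδ
    have hδpos : 0 < δ := by rw [hδ]; linarith
    obtain ⟨y, ⟨x, hxlen, rfl⟩, hyl⟩ := exists_lt_of_csInf_lt (hne (n+1))
      (lt_add_of_pos_right (sInf _) hδpos)
    match x, hxlen with
    | a :: t, hxlen =>
      have htlen : t.length = n := by simpa using hxlen
      have := hineq (a :: t)
      rw [lapB_cons] at this
      have hlen2 : ((a :: t).length : ℤ) = (n:ℤ) + 1 := by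
        rw [List.length_cons, htlen]; push_cast; ring
      rw [hlen2, pB_eq hβ0] at this
      -- multiply by pb^(n+1)
      have key : pb β ^ (-(((n:ℤ)+1))) * pb β ^ (n+1) = 1 := by
        rw [← zpow_natCast (pb β) (n+1), ← zpow_add₀ (ne_of_gt hp0)]
        have he : (-((n:ℤ)+1)) + ((n+1:ℕ) : ℤ) = 0 := by push_cast; ring
        rw [he, zpow_zero]
      have hpn : (0:ℝ) < pb β ^ (n+1) := pow_pos hp0 _
      have hmul : β * v t + (1 - β) * (∑ i : Fin m, v (i :: a :: t)) / m - v (a :: t)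
          + lam * pb β ^ (n+1) * v (a :: t) ≤ 0 := by
        have h3 := mul_le_mul_of_nonneg_right this hpn.le
        rw [zero_mul, add_mul] at h3
        calc β * v t + (1 - β) * (∑ i : Fin m, v (i :: a :: t)) / m - v (a :: t)
            + lam * pb β ^ (n+1) * v (a :: t)
            = (β * v t + (1 - β) * (∑ i : Fin m, v (i :: a :: t)) / m - v (a :: t)) *
              (pb β ^ (-((n:ℤ) + 1)) * pb β ^ (n+1)) + lam * v (a :: t) * pb β ^ (n+1) := by
              rw [key]; ring
          _ ≤ 0 := by rw [← mul_assoc]; exact h3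
      -- bound the terms from below
      have hb1 : β * h' n ≤ β * v t := by
        apply mul_le_mul_of_nonneg_left (hle n t htlen) hβ0.le
      have hsum : (m:ℝ) * h' (n+2) ≤ ∑ i : Fin m, v (i :: a :: t) := by
        calc (m:ℝ) * h' (n+2) = ∑ _i : Fin m, h' (n+2) := by
              rw [Finset.sum_const, Finset.card_univ, Fintype.card_fin, nsmul_eq_mul]
          _ ≤ _ := Finset.sum_le_sum (fun i _ => hle (n+2) (i :: a :: t) (by simp [htlen]))
      have hb2 : (1-β) * h' (n+2) ≤ (1 - β) * (∑ i : Fin m, v (i :: a :: t)) / m := by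
        rw [mul_div_assoc]
        apply mul_le_mul_of_nonneg_left _ (by linarith : (0:ℝ) ≤ 1 - β)
        rw [le_div_iff₀ hm0]
        linarith
      have hb3 : lam * pb β ^ (n+1) * h' (n+1) ≤ lam * pb β ^ (n+1) * v (a :: t) :=
        mul_le_mul_of_nonneg_left (hle (n+1) (a :: t) (by simp [htlen]))
          (by positivity)
      have hvx : v (a :: t) < h' (n+1) + δ := hyl
      -- combine
      have : β * h' n + (1-β) * h' (n+2) - (h' (n+1) + δ) + lam * pb β ^ (n+1) * h' (n+1)
          < 0 := by linarith
      rw [hδ] at this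
      linarith
  -- comparison
  have hcmp := gg_cmp β lam lam hβ0 hβ1 hl.le le_rfl h' h'pos
    (by rw [h0] at hroot ⊢; exact hroot) hrec
  refine ⟨hl, c / C, div_pos hc (lt_trans (lt_trans hc (hv []).1) (hv []).2), fun n => ?_⟩
  obtain ⟨hgpos, hble, -⟩ := hcmp n
  have hCpos : 0 < C := lt_trans (lt_trans hc (hv []).1) (hv []).2
  rw [div_le_iff₀ hCpos]
  calc c ≤ h' n := hcle n
    _ ≤ h' 0 * gg β lam n := hble
    _ ≤ C * gg β lam n := mul_le_mul_of_nonneg_right hh0C.le hgpos.le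
    _ = gg β lam n * C := by ring

lemma memA_eq_Bset (hm : 2 ≤ m) (hβ0 : 0 < β) (hβ1 : β < 1/2) :
    {lam | memA m β lam} = Bset β :=
  Set.ext fun lam => ⟨fun h => memA_subset_Bset hm hβ0 hβ1 h,
    fun h => Bset_subset_memA hm hβ0 hβ1 h⟩

lemma lam1_eq_lamB (hm : 2 ≤ m) (hβ0 : 0 < β) (hβ1 : β < 1/2) :
    lam1 m β = lamB β := by
  rw [lam1, lamB, memA_eq_Bset hm hβ0 hβ1]

end

theorem stmt19 (m : ℕ) (hm : 2 ≤ m) (β : ℝ) (hβ0 : 0 < β) (hβ1 : β < 1 / 2) :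
    ∃ u : List (Fin m) → ℝ,
      u [] = 1 ∧ (∀ x, 0 < u x) ∧
      (∃ g : ℕ → ℝ, Antitone g ∧ ∀ x, u x = g x.length) ∧
      (∀ x, lapB m β u x + lam1 m β * u x = 0) ∧
      ZeroOnBoundary m u := by
  have hβ1' : β < 1/2 := hβ1
  refine ⟨fun y => gg β (lamB β) y.length, gg_zero β _, ?_, ?_, ?_, ?_⟩
  · exact fun x => gstar_pos hβ0 hβ1' x.length
  · exact ⟨gg β (lamB β),
      (gg_antitone_of_pos hβ0 hβ1' (lamB_pos hβ0 hβ1').le (gstar_nonneg hβ0 hβ1')).2.1,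
      fun x => rfl⟩
  · intro x
    rw [lam1_eq_lamB hm hβ0 hβ1']
    exact lapB_radial hm hβ0 hβ1' (lamB β) x
  · intro b hb
    have hlen : ∀ n, (b n).length = n := by
      intro n
      induction n with
      | zero => rw [hb.1]; rfl
      | succ n ih =>
        obtain ⟨i, hi⟩ := hb.2 n
        rw [hi, List.length_cons, ih]
    have := gstar_tendsto hβ0 hβ1'
    apply this.congr
    intro n
    show gg β (lamB β) n = gg β (lamB β) (b n).length
    rw [hlen n]
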